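/- For all natural numbers m and n, the balanced quantum binomial ⟨m+n choose m,n⟩_q, a priori an element of the field ℚ(q), is equal to a Laurent polynomial in q with nonnegative integer coefficients; explicitly, it equals ∑_{Y ⊆ {1,…,m+n}, #Y = m} q^{d(Y, {1,…,m+n} \ Y)}, a finite sum of integer powers of q. -/

import Mathlib

noncomputable section

/-- The indeterminate `q` in the field `ℚ(q)` of rational functions over `ℚ`. -/
def q : RatFunc ℚ := RatFunc.X

/-- The balanced quantum integer `[n]_q = (q^n - q^{-n})/(q - q^{-1})`. -/
def qInt (n : ℕ) : RatFunc ℚ := (q ^ (n : ℤ) - q ^ (-(n : ℤ))) / (q - q⁻¹)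

/-- The quantum factorial `[n]_q! = ∏_{j=1}^n [j]_q`. -/
def qFact (n : ℕ) : RatFunc ℚ := ∏ j ∈ Finset.range n, qInt (j + 1)

/-- The balanced quantum binomial `⟨m+n choose m,n⟩_q = [m+n]_q! / ([m]_q! · [n]_q!)`
for natural numbers `m`, `n`. -/
def qBinom (m n : ℕ) : RatFunc ℚ := qFact (m + n) / (qFact m * qFact n)

/-- The degree `d(Y,Z) = #{(y,z) ∈ Y × Z : y < z} − #{(y,z) ∈ Y × Z : y > z}`
of a pair of (disjoint) finite sets of integers. -/
def deg (Y Z : Finset ℤ) : ℤ :=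
  (((Y ×ˢ Z).filter fun p => p.1 < p.2).card : ℤ) -
    (((Y ×ˢ Z).filter fun p => p.2 < p.1).card : ℤ)


lemma q_ne_zero : q ≠ 0 := RatFunc.X_ne_zero

lemma q_pow_ne_one {k : ℕ} (hk : k ≠ 0) : q ^ k ≠ 1 := by
  intro h
  have h2 : (algebraMap (Polynomial ℚ) (RatFunc ℚ)) (Polynomial.X ^ k) =
      (algebraMap (Polynomial ℚ) (RatFunc ℚ)) 1 := by
    simpa [q, RatFunc.algebraMap_X, map_pow] using h
  have h3 : (Polynomial.X : Polynomial ℚ) ^ k = 1 :=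
    RatFunc.algebraMap_injective ℚ h2
  have := congrArg Polynomial.natDegree h3
  simp [Polynomial.natDegree_X_pow] at this
  exact hk this

lemma qsub_ne_zero : q - q⁻¹ ≠ 0 := by
  intro h
  have h1 : q = q⁻¹ := by linear_combination h
  have h2 : q * q = 1 := by nth_rewrite 2 [h1]; exact mul_inv_cancel₀ q_ne_zero
  exact q_pow_ne_one (k := 2) (by norm_num) (by rw [sq]; exact h2)

lemma qInt_eq (n : ℕ) : qInt n = (q ^ n - (q ^ n)⁻¹) / (q - q⁻¹) := by
  rw [qInt, zpow_natCast, zpow_neg, zpow_natCast]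

lemma qInt_ne_zero {n : ℕ} (hn : n ≠ 0) : qInt n ≠ 0 := by
  rw [qInt_eq, div_ne_zero_iff]
  refine ⟨?_, qsub_ne_zero⟩
  intro h
  have hq : q ^ n ≠ 0 := pow_ne_zero _ q_ne_zero
  have : q ^ (n + n) = 1 := by
    have := congrArg (· * q ^ n) h
    field_simp at this
    rw [pow_add]
    linear_combination this
  exact q_pow_ne_one (by omega) this

lemma qFact_ne_zero (n : ℕ) : qFact n ≠ 0 :=
  Finset.prod_ne_zero_iff.mpr fun j _ => qInt_ne_zero (Nat.succ_ne_zero j)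

lemma qInt_add (m n : ℕ) : qInt (m + n) = (q ^ n)⁻¹ * qInt m + q ^ m * qInt n := by
  have h1 : q ≠ 0 := q_ne_zero
  have h3 : (q : RatFunc ℚ) ^ n ≠ 0 := pow_ne_zero _ h1
  have h4 : (q : RatFunc ℚ) ^ m ≠ 0 := pow_ne_zero _ h1
  have num : q ^ (m + n) - (q ^ (m + n))⁻¹ =
      (q ^ n)⁻¹ * (q ^ m - (q ^ m)⁻¹) + q ^ m * (q ^ n - (q ^ n)⁻¹) := by
    field_simp [pow_add]
    ring
  rw [qInt_eq, qInt_eq, qInt_eq, ← mul_div_assoc, ← mul_div_assoc,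
    ← add_div, num]

lemma qFact_zero : qFact 0 = 1 := by simp [qFact]

lemma qBinom_zero_left (n : ℕ) : qBinom 0 n = 1 := by
  rw [qBinom, Nat.zero_add, qFact_zero, one_mul, div_self (qFact_ne_zero n)]

lemma qBinom_zero_right (m : ℕ) : qBinom m 0 = 1 := by
  rw [qBinom, Nat.add_zero, qFact_zero, mul_one, div_self (qFact_ne_zero m)]

lemma qFact_succ (n : ℕ) : qFact (n + 1) = qFact n * qInt (n + 1) :=
  Finset.prod_range_succ _ _

lemma field_aux {K : Type*} [Field K] {F A B G H x y : K} (hA : A ≠ 0) (hB : B ≠ 0)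
    (hG : G ≠ 0) (hH : H ≠ 0) (hx : x ≠ 0) :
    F * (x⁻¹ * A + y * B) / (G * A * (H * B)) =
      x⁻¹ * (F / (G * (H * B))) + y * (F / (G * A * H)) := by
  rw [← mul_div_assoc, ← mul_div_assoc,
    div_add_div _ _ (mul_ne_zero hG (mul_ne_zero hH hB)) (mul_ne_zero (mul_ne_zero hG hA) hH),
    div_eq_div_iff (mul_ne_zero (mul_ne_zero hG hA) (mul_ne_zero hH hB))
      (mul_ne_zero (mul_ne_zero hG (mul_ne_zero hH hB)) (mul_ne_zero (mul_ne_zero hG hA) hH))]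
  ring

lemma qBinom_rec (m n : ℕ) :
    qBinom (m + 1) (n + 1) =
      (q ^ (n + 1))⁻¹ * qBinom m (n + 1) + q ^ (m + 1) * qBinom (m + 1) n := by
  have key : qInt (m + 1 + (n + 1)) = (q ^ (n+1))⁻¹ * qInt (m+1) + q ^ (m+1) * qInt (n+1) :=
    qInt_add (m+1) (n+1)
  have e1 : m + 1 + (n + 1) = (m + n + 1) + 1 := by ring
  have e2 : m + (n + 1) = m + n + 1 := by ring
  have e3 : m + 1 + n = m + n + 1 := by ring
  rw [e1] at key
  rw [qBinom, qBinom, qBinom, e1, e2, e3, qFact_succ (m+n+1), qFact_succ m, qFact_succ n, key]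
  have h1 : qFact m ≠ 0 := qFact_ne_zero m
  have h2 : qFact n ≠ 0 := qFact_ne_zero n
  have h3 : qInt (m+1) ≠ 0 := qInt_ne_zero (by omega)
  have h4 : qInt (n+1) ≠ 0 := qInt_ne_zero (by omega)
  have h5 : (q:RatFunc ℚ) ^ (n+1) ≠ 0 := pow_ne_zero _ q_ne_zero
  have h6 : (q:RatFunc ℚ) ^ (m+1) ≠ 0 := pow_ne_zero _ q_ne_zero
  exact field_aux h3 h4 h1 h2 h5

def e (y z : ℤ) : ℤ := if y < z then 1 else if z < y then -1 else 0

lemma deg_eq_sum (Y Z : Finset ℤ) : deg Y Z = ∑ y ∈ Y, ∑ z ∈ Z, e y z := by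
  rw [deg, Finset.card_filter, Finset.card_filter]
  push_cast
  rw [← Finset.sum_sub_distrib, Finset.sum_product]
  refine Finset.sum_congr rfl fun y _ => Finset.sum_congr rfl fun z _ => ?_
  unfold e
  split_ifs <;> norm_num <;> omega

lemma deg_insert_right (Y Z : Finset ℤ) {a : ℤ} (ha : a ∉ Z) (h : ∀ y ∈ Y, y < a) :
    deg Y (insert a Z) = deg Y Z + Y.card := by
  rw [deg_eq_sum, deg_eq_sum]
  rw [Finset.sum_congr rfl fun y (_ : y ∈ Y) => Finset.sum_insert ha,
    Finset.sum_add_distrib]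
  have h2 : ∀ y ∈ Y, e y a = 1 := fun y hy => if_pos (h y hy)
  rw [Finset.sum_congr rfl h2, Finset.sum_const]
  simp [add_comm]

lemma deg_insert_left (Y Z : Finset ℤ) {a : ℤ} (ha : a ∉ Y) (h : ∀ z ∈ Z, z < a) :
    deg (insert a Y) Z = deg Y Z - Z.card := by
  rw [deg_eq_sum, deg_eq_sum, Finset.sum_insert ha]
  have h2 : ∀ z ∈ Z, e a z = -1 := by
    intro z hz
    unfold e
    rw [if_neg (by exact not_lt.mpr (le_of_lt (h z hz))), if_pos (h z hz)]
  rw [Finset.sum_congr rfl h2, Finset.sum_const]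
  push_cast
  ring

def S (N m : ℕ) : RatFunc ℚ :=
  ∑ Y ∈ (Finset.Icc (1 : ℤ) (N : ℤ)).powersetCard m,
    q ^ deg Y (Finset.Icc (1 : ℤ) (N : ℤ) \ Y)

lemma card_Icc_int (N : ℕ) : (Finset.Icc (1 : ℤ) (N : ℤ)).card = N := by
  rw [Int.card_Icc]; omega

lemma S_zero (N : ℕ) : S N 0 = 1 := by
  simp [S, deg]

lemma S_self (N : ℕ) : S N N = 1 := by
  rw [S]
  set A := Finset.Icc (1 : ℤ) (N : ℤ) with hA
  rw [show N = A.card from (card_Icc_int N).symm, Finset.powersetCard_self]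
  simp [deg]


lemma S_rec (m n : ℕ) :
    S (m + n + 2) (m + 1) =
      (q ^ (n + 1))⁻¹ * S (m + n + 1) m + q ^ (m + 1) * S (m + n + 1) (m + 1) := by
  set N : ℤ := ((m + n + 2 : ℕ) : ℤ) with hN
  set A := Finset.Icc (1 : ℤ) ((m + n + 2 : ℕ) : ℤ) with hA
  set B := Finset.Icc (1 : ℤ) ((m + n + 1 : ℕ) : ℤ) with hB
  have hNB : N ∉ B := by rw [hB, Finset.mem_Icc]; push_cast; omega
  have hAB : A = insert N B := by
    ext x; simp [hA, hB, hN, Finset.mem_insert]; omega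
  have hBlt : ∀ x ∈ B, x < N := by
    intro x hx; simp [hB] at hx; simp [hN]; omega
  have hcardB : B.card = m + n + 1 := card_Icc_int _
  rw [S, ← hA, ← Finset.sum_filter_add_sum_filter_not (A.powersetCard (m+1)) (fun Y => N ∈ Y)]
  -- second summand: Y not containing N
  have h2 : (A.powersetCard (m+1)).filter (fun Y => ¬ N ∈ Y) = B.powersetCard (m+1) := by
    ext Y
    simp only [Finset.mem_filter, Finset.mem_powersetCard]
    constructor
    · rintro ⟨⟨hsub, hcard⟩, hNY⟩
      refine ⟨fun y hy => ?_, hcard⟩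
      have := hsub hy
      rw [hAB, Finset.mem_insert] at this
      rcases this with h | h
      · exact absurd (h ▸ hy) hNY
      · exact h
    · rintro ⟨hsub, hcard⟩
      refine ⟨⟨fun y hy => ?_, hcard⟩, fun hNY => hNB (hsub hNY)⟩
      rw [hAB, Finset.mem_insert]; exact Or.inr (hsub hy)
  have h2' : ∀ Y ∈ B.powersetCard (m+1),
      q ^ deg Y (A \ Y) = q ^ (m + 1) * q ^ deg Y (B \ Y) := by
    intro Y hY
    rw [Finset.mem_powersetCard] at hY
    have hNY : N ∉ Y := fun h => hNB (hY.1 h)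
    have : A \ Y = insert N (B \ Y) := by
      rw [hAB, Finset.insert_sdiff_of_notMem _ hNY]
    rw [this, deg_insert_right _ _ (fun h => hNB (Finset.mem_sdiff.mp h).1)
      (fun y hy => hBlt y (hY.1 hy)), hY.2]
    rw [zpow_add₀ q_ne_zero, mul_comm, zpow_natCast]
  -- first summand: Y containing N
  have h1 : ∑ Y ∈ (A.powersetCard (m+1)).filter (fun Y => N ∈ Y), q ^ deg Y (A \ Y)
      = ∑ Y ∈ B.powersetCard m, (q ^ (n+1))⁻¹ * q ^ deg Y (B \ Y) := by
    refine Finset.sum_nbij' (fun Y => Y.erase N) (fun Y => insert N Y) ?_ ?_ ?_ ?_ ?_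
    · intro Y hY
      rw [Finset.mem_filter, Finset.mem_powersetCard] at hY
      rw [Finset.mem_powersetCard]
      constructor
      · intro y hy
        rw [Finset.mem_erase] at hy
        have := hY.1.1 hy.2
        rw [hAB, Finset.mem_insert] at this
        tauto
      · rw [Finset.card_erase_of_mem hY.2, hY.1.2]; omega
    · intro Y hY
      rw [Finset.mem_powersetCard] at hY
      have hNY : N ∉ Y := fun h => hNB (hY.1 h)
      rw [Finset.mem_filter, Finset.mem_powersetCard]
      refine ⟨⟨?_, ?_⟩, Finset.mem_insert_self _ _⟩
      · rw [hAB]; exact Finset.insert_subset_insert _ hY.1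
      · rw [Finset.card_insert_of_notMem hNY, hY.2]
    · intro Y hY
      rw [Finset.mem_filter] at hY
      exact Finset.insert_erase hY.2
    · intro Y hY
      rw [Finset.mem_powersetCard] at hY
      exact Finset.erase_insert (fun h => hNB (hY.1 h))
    · intro Y hY
      rw [Finset.mem_filter, Finset.mem_powersetCard] at hY
      set Y' := Y.erase N with hY'
      have hNY' : N ∉ Y' := Finset.notMem_erase _ _
      have hYins : Y = insert N Y' := (Finset.insert_erase hY.2).symm
      have hY'B : Y' ⊆ B := by
        intro y hy
        rw [hY', Finset.mem_erase] at hy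
        have := hY.1.1 hy.2
        rw [hAB, Finset.mem_insert] at this
        tauto
      have hsd : A \ Y = B \ Y' := by
        rw [hYins, hAB]
        ext x
        simp only [Finset.mem_sdiff, Finset.mem_insert, not_or]
        constructor
        · rintro ⟨h | h, hx2, hx3⟩
          · exact absurd h hx2
          · exact ⟨h, hx3⟩
        · rintro ⟨hx1, hx2⟩
          exact ⟨Or.inr hx1, fun h => hNB (h ▸ hx1), hx2⟩
      have hcardY' : Y'.card = m := by
        rw [hY', Finset.card_erase_of_mem hY.2, hY.1.2]; omega
      have hcardsd : (B \ Y').card = n + 1 := by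
        rw [Finset.card_sdiff_of_subset hY'B, hcardB, hcardY']; omega
      rw [hsd]
      nth_rewrite 1 [hYins]
      rw [deg_insert_left _ _ hNY' (fun z hz => hBlt z (Finset.mem_sdiff.mp hz).1), hcardsd]
      rw [zpow_sub₀ q_ne_zero, zpow_natCast]
      rw [div_eq_mul_inv, mul_comm]
  rw [h1, h2, Finset.sum_congr rfl h2', ← Finset.mul_sum, ← Finset.mul_sum, S, S, ← hB]


lemma qBinom_eq_S (m : ℕ) : ∀ n, qBinom m n = S (m + n) m := by
  induction m with
  | zero =>
    intro n
    rw [qBinom_zero_left, Nat.zero_add, S_zero]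
  | succ m ih =>
    intro n
    induction n with
    | zero =>
      rw [qBinom_zero_right, Nat.add_zero, S_self]
    | succ n ih2 =>
      rw [qBinom_rec, ih (n + 1), ih2,
        show m + (n + 1) = m + n + 1 from by omega,
        show m + 1 + n = m + n + 1 from by omega,
        show m + 1 + (n + 1) = m + n + 2 from by omega,
        S_rec]

/-- The balanced quantum binomial `⟨m+n choose m,n⟩_q` equals the explicit Laurent
polynomial `∑_{Y ⊆ {1,…,m+n}, #Y = m} q^{d(Y, {1,…,m+n} \ Y)}`; in particular it is a
Laurent polynomial in `q` with nonnegative integer coefficients. -/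
theorem qBinom_laurent (m n : ℕ) :
    qBinom m n =
      (∑ Y ∈ (Finset.Icc (1 : ℤ) (m + n)).powersetCard m,
        q ^ deg Y (Finset.Icc (1 : ℤ) (m + n) \ Y)) ∧
    ∃ c : ℤ →₀ ℕ, qBinom m n = ∑ k ∈ c.support, (c k : RatFunc ℚ) * q ^ k := by
  have part1 : qBinom m n =
      ∑ Y ∈ (Finset.Icc (1 : ℤ) (m + n)).powersetCard m,
        q ^ deg Y (Finset.Icc (1 : ℤ) (m + n) \ Y) := by
    rw [qBinom_eq_S m n, S]
    norm_cast
  refine ⟨part1, ?_⟩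
  set s := (Finset.Icc (1 : ℤ) ((m : ℤ) + (n : ℤ))).powersetCard m with hs
  set f : Finset ℤ → ℤ := fun Y => deg Y (Finset.Icc (1 : ℤ) ((m : ℤ) + (n : ℤ)) \ Y) with hf
  refine ⟨Finsupp.onFinset (s.image f) (fun k => (s.filter fun Y => f Y = k).card) ?_, ?_⟩
  · intro k hk
    rw [Finset.mem_image]
    obtain ⟨Y, hY⟩ := Finset.card_ne_zero.mp hk
    rw [Finset.mem_filter] at hY
    exact ⟨Y, hY.1, hY.2⟩
  · rw [part1]
    have hcomp : ∑ Y ∈ s, q ^ f Y =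
        ∑ k ∈ s.image f, ((s.filter fun Y => f Y = k).card) • q ^ k :=
      Finset.sum_comp (fun k => q ^ k) f
    rw [hcomp]
    rw [Finset.sum_subset (Finsupp.support_onFinset_subset)
      (fun k _ hk => by
        rw [Finsupp.notMem_support_iff.mp hk]
        simp)]
    refine Finset.sum_congr rfl fun k _ => ?_
    rw [Finsupp.onFinset_apply, nsmul_eq_mul]
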